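/- Fix n ≥ 1 and 1 ≤ k ≤ n. The ℚ-linear span of all n×n 0-1 matrices that have exactly one 1 in each row and whose nonzero entries all lie in a fixed set of k columns has dimension exactly n(k-1)+1. -/

import Mathlib

open Matrix

/-- The 0-1 matrix of a mapping `f` of an `n`-element set. -/
def matOf {n : ℕ} (f : Fin n → Fin n) : Matrix (Fin n) (Fin n) ℚ :=
  fun i j => if f i = j then 1 else 0

theorem dim_span_mapping_matrices_into_k_columns {n k : ℕ} (hn : 1 ≤ n)
    (K : Finset (Fin n)) (hK : K.card = k) (hk : 1 ≤ k) :
    Module.finrank ℚ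
      ↥(Submodule.span ℚ
        {M : Matrix (Fin n) (Fin n) ℚ |
          ∃ f : Fin n → Fin n, (∀ i, f i ∈ K) ∧ M = matOf f}) =
      n * (k - 1) + 1 := by
  classical
  obtain ⟨c, hc⟩ : K.Nonempty := Finset.card_pos.mp (hK ▸ hk)
  set S : Set (Matrix (Fin n) (Fin n) ℚ) :=
    {M | ∃ f : Fin n → Fin n, (∀ i, f i ∈ K) ∧ M = matOf f} with hS
  set b : Option (Fin n × ↥(K.erase c)) → Matrix (Fin n) (Fin n) ℚ := fun x =>
    match x with
    | none => matOf (fun _ => c)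
    | some (i, j) => Matrix.single i (j : Fin n) 1 - Matrix.single i c 1
    with hb_def
  have key : ∀ f : Fin n → Fin n, matOf f =
      matOf (fun _ => c)
        + ∑ i : Fin n, (Matrix.single i (f i) (1 : ℚ) - Matrix.single i c 1) := by
    intro f
    ext a b'
    rw [Matrix.add_apply, Matrix.sum_apply]
    rw [Finset.sum_eq_single a ?h1 ?h2]
    case h1 => intro i _ hia; simp [Matrix.single, hia]
    case h2 => simp
    simp only [Matrix.sub_apply, Matrix.single, Matrix.of_apply, matOf, true_and]
    split_ifs <;> simp_all
  have hspan : Submodule.span ℚ S = Submodule.span ℚ (Set.range b) := by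
    apply le_antisymm
    · rw [Submodule.span_le]
      rintro M ⟨f, hf, rfl⟩
      rw [key f]
      refine Submodule.add_mem _ (Submodule.subset_span ⟨none, rfl⟩)
        (Submodule.sum_mem _ ?_)
      intro i _
      by_cases h : f i = c
      · simp [h]
      · exact Submodule.subset_span
          ⟨some (i, ⟨f i, Finset.mem_erase.mpr ⟨h, hf i⟩⟩), rfl⟩
    · rw [Submodule.span_le]
      rintro M ⟨x, rfl⟩
      match x with
      | none => exact Submodule.subset_span ⟨fun _ => c, fun _ => hc, rfl⟩
      | some (i, j) =>
        have hbij : b (some (i, j)) =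
            matOf (Function.update (fun _ => c) i (j : Fin n))
              - matOf (fun _ => c) := by
          ext a b'
          simp only [hb_def, Matrix.sub_apply, Matrix.single, Matrix.of_apply,
            matOf, Function.update_apply]
          by_cases hai : a = i
          · subst hai; simp
          · simp [hai, Ne.symm hai]
        rw [hbij]
        exact Submodule.sub_mem _
          (Submodule.subset_span ⟨_, fun i' => by
            by_cases h : i' = i <;>
              simp [Function.update_apply, h, (Finset.mem_erase.mp j.2).2, hc], rfl⟩)
          (Submodule.subset_span ⟨_, fun _ => hc, rfl⟩)
  have hli : LinearIndependent ℚ b := by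
    rw [Fintype.linearIndependent_iff]
    intro g hg
    have hsome : ∀ p : Fin n × ↥(K.erase c), g (some p) = 0 := by
      rintro ⟨i, j⟩
      have hjc : (j : Fin n) ≠ c := (Finset.mem_erase.mp j.2).1
      have h1 := congrFun (congrFun hg i) (j : Fin n)
      simp [hb_def, Matrix.sum_apply, Fintype.sum_option, Matrix.single, matOf,
        hjc.symm, hjc] at h1
      rw [Finset.sum_eq_single (i, j)] at h1
      · simpa using h1
      · rintro ⟨i', j'⟩ _ hne
        have : ¬(i' = i ∧ (j' : Fin n) = (j : Fin n)) := by
          rintro ⟨rfl, hj⟩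
          exact hne (by simp [Prod.ext_iff, Subtype.ext hj])
        rw [if_neg (fun h' => this ⟨h'.1, congrArg Subtype.val h'.2⟩)]
      · simp
    have h2 := congrFun (congrFun hg ⟨0, hn⟩) c
    simp [hb_def, Matrix.sum_apply, Fintype.sum_option, Matrix.single, matOf,
      hsome] at h2
    intro x
    match x with
    | none => exact h2
    | some p => exact hsome p
  have hcard : Fintype.card (Option (Fin n × ↥(K.erase c))) = n * (k - 1) + 1 := by
    have h3 : Fintype.card ↥(K.erase c) = k - 1 := by
      rw [Fintype.card_coe, Finset.card_erase_of_mem hc, hK]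
    rw [Fintype.card_option, Fintype.card_prod, Fintype.card_fin, h3]
  rw [hspan, finrank_span_eq_card hli, hcard]
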